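/- Let T be a finite tree with diameter at least 3 and maximum degree Δ ≥ 3, and let h be an integer with 1 ≤ h ≤ Δ. If T contains T̂_{Δ−1,2} as a subtree (equivalently, T has a vertex of degree Δ all of whose neighbours have degree Δ), then σ_{h,1,1}(T) = σ*_{h,1,1}(T) = h + 2Δ − 1. -/

import Mathlib

open SimpleGraph

/-- An `L(h,p,p)`-labelling of `G` with span `ℓ`: labels in `{0,…,ℓ}`, labels of vertices at
distance 1 differ by at least `h`, labels of vertices at distance 2 or 3 differ by at least `p`. -/
def IsLLabelling {V : Type} (G : SimpleGraph V) (h p ℓ : ℕ) (f : V → ℕ) : Prop :=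
  (∀ v, f v ≤ ℓ) ∧
  (∀ u v, G.dist u v = 1 → (h : ℤ) ≤ |(f u : ℤ) - (f v : ℤ)|) ∧
  (∀ u v, G.dist u v = 2 ∨ G.dist u v = 3 → (p : ℤ) ≤ |(f u : ℤ) - (f v : ℤ)|)

/-- `λ_{h,p,p}(G)`: the minimum span of an `L(h,p,p)`-labelling of `G`. -/
noncomputable def lambdaNum {V : Type} (G : SimpleGraph V) (h p : ℕ) : ℕ :=
  sInf {ℓ : ℕ | ∃ f : V → ℕ, IsLLabelling G h p ℓ f}

/-- A circular interval modulo `n`: a set of residues of the form `{a, a+1, …, a+s}` mod `n`. -/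
def IsCircInterval (n : ℕ) (I : Set (ZMod n)) : Prop :=
  ∃ (a : ZMod n) (s : ℕ), I = {x : ZMod n | ∃ i : ℕ, i ≤ s ∧ x = a + (i : ZMod n)}

/-- An elegant `L(h,p,p)`-labelling: additionally each vertex `u` has a circular interval `I u`
modulo `ℓ+1` containing the labels of all neighbours of `u`, with `I u ∩ I v = ∅` for edges `uv`. -/
def IsElegantLLabelling {V : Type} (G : SimpleGraph V) (h p ℓ : ℕ) (f : V → ℕ) : Prop :=
  IsLLabelling G h p ℓ f ∧
  ∃ I : V → Set (ZMod (ℓ + 1)),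
    (∀ u, IsCircInterval (ℓ + 1) (I u)) ∧
    (∀ u w, G.Adj u w → ((f w : ZMod (ℓ + 1)) ∈ I u)) ∧
    (∀ u v, G.Adj u v → I u ∩ I v = ∅)

/-- `λ*_{h,p,p}(G)`: the minimum span of an elegant `L(h,p,p)`-labelling of `G`. -/
noncomputable def lambdaStar {V : Type} (G : SimpleGraph V) (h p : ℕ) : ℕ :=
  sInf {ℓ : ℕ | ∃ f : V → ℕ, IsElegantLLabelling G h p ℓ f}

/-- The `ℓ`-cyclic distance between labels `a` and `b`. -/
def cycDist (ℓ a b : ℕ) : ℤ :=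
  min |(a : ℤ) - (b : ℤ)| ((ℓ : ℤ) - |(a : ℤ) - (b : ℤ)|)

/-- A `C(h,p,p)`-labelling of `G` with span `ℓ`: labels in `{0,…,ℓ-1}`, and the `ℓ`-cyclic distance
between labels of vertices at distance 1 (resp. 2 or 3) is at least `h` (resp. `p`). -/
def IsCLabelling {V : Type} (G : SimpleGraph V) (h p ℓ : ℕ) (f : V → ℕ) : Prop :=
  (∀ v, f v < ℓ) ∧
  (∀ u v, G.dist u v = 1 → (h : ℤ) ≤ cycDist ℓ (f u) (f v)) ∧
  (∀ u v, G.dist u v = 2 ∨ G.dist u v = 3 → (p : ℤ) ≤ cycDist ℓ (f u) (f v))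

/-- `σ_{h,p,p}(G)`: the minimum positive `ℓ` such that `G` has a `C(h,p,p)`-labelling of span `ℓ`. -/
noncomputable def sigmaNum {V : Type} (G : SimpleGraph V) (h p : ℕ) : ℕ :=
  sInf {ℓ : ℕ | 0 < ℓ ∧ ∃ f : V → ℕ, IsCLabelling G h p ℓ f}

/-- An elegant `C(h,p,p)`-labelling: additionally each vertex `u` has a circular interval `I u`
modulo `ℓ` containing the labels of all neighbours of `u`, with `I u ∩ I v = ∅` for edges `uv`. -/
def IsElegantCLabelling {V : Type} (G : SimpleGraph V) (h p ℓ : ℕ) (f : V → ℕ) : Prop :=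
  IsCLabelling G h p ℓ f ∧
  ∃ I : V → Set (ZMod ℓ),
    (∀ u, IsCircInterval ℓ (I u)) ∧
    (∀ u w, G.Adj u w → ((f w : ZMod ℓ) ∈ I u)) ∧
    (∀ u v, G.Adj u v → I u ∩ I v = ∅)

/-- `σ*_{h,p,p}(G)`: the minimum positive `ℓ` such that `G` has an elegant `C(h,p,p)`-labelling
of span `ℓ`. -/
noncomputable def sigmaStar {V : Type} (G : SimpleGraph V) (h p : ℕ) : ℕ :=
  sInf {ℓ : ℕ | 0 < ℓ ∧ ∃ f : V → ℕ, IsElegantCLabelling G h p ℓ f}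

/-- `Δ₂(G) = max over edges uv of (deg u + deg v)`. -/
noncomputable def deltaTwo {V : Type} (G : SimpleGraph V) [Fintype V] [DecidableRel G.Adj] : ℕ :=
  sSup {d : ℕ | ∃ u v : V, G.Adj u v ∧ d = G.degree u + G.degree v}

namespace Aux


lemma submod {ℓ x y : ℕ} (hx : x < ℓ) (hy : y < ℓ) :
    (x + ℓ - y) % ℓ = if y ≤ x then x - y else x + ℓ - y := by
  split_ifs with hc
  · have h1 : x + ℓ - y = (x - y) + ℓ := by omega
    rw [h1, Nat.add_mod_right, Nat.mod_eq_of_lt (by omega)]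
  · exact Nat.mod_eq_of_lt (by omega)

lemma cycDist_comm (ℓ a b : ℕ) : cycDist ℓ a b = cycDist ℓ b a := by
  unfold cycDist; rw [abs_sub_comm]

lemma cyc_eq {ℓ p q : ℕ} (hp : p < ℓ) (hq : q < ℓ) :
    cycDist ℓ p q = ((min ((p + ℓ - q) % ℓ) ((q + ℓ - p) % ℓ) : ℕ) : ℤ) := by
  rw [submod hp hq, submod hq hp]
  unfold cycDist
  rcases le_total q p with hc | hc
  · rw [if_pos hc, abs_of_nonneg (by omega : (0:ℤ) ≤ (p:ℤ) - q)]
    rcases eq_or_lt_of_le hc with rfl | hlt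
    · simp [Nat.mod_self]
    · rw [if_neg (by omega), Nat.cast_min]
      congr 1 <;> omega
  · rw [abs_of_nonpos (by omega : (p:ℤ) - q ≤ 0)]
    rcases eq_or_lt_of_le hc with rfl | hlt
    · simp [Nat.mod_self]
    · rw [if_neg (by omega), if_pos (by omega), min_comm, Nat.cast_min]
      congr 1 <;> omega

/-- the cyclic distance from `p` to `(p+t) % ℓ` is at least `h` when `h ≤ t ≤ ℓ - h`. -/
lemma cyc_ge {ℓ p t h : ℕ} (hp : p < ℓ) (h1 : h ≤ t) (h2 : t + h ≤ ℓ) :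
    (h : ℤ) ≤ cycDist ℓ p ((p + t) % ℓ) := by
  have hq : (p + t) % ℓ < ℓ := Nat.mod_lt _ (by omega)
  rw [cyc_eq hp hq]
  have hmod : (p + t) % ℓ = if p + t < ℓ then p + t else p + t - ℓ := by
    split_ifs with hc
    · exact Nat.mod_eq_of_lt hc
    · rw [Nat.mod_eq_sub_mod (by omega), Nat.mod_eq_of_lt (by omega)]
  rw [submod hp hq, submod hq hp]
  split_ifs at hmod ⊢ <;> push_cast <;> omega

lemma cyc_ge_one {ℓ p q : ℕ} (hp : p < ℓ) (hq : q < ℓ) (hne : p ≠ q) :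
    (1 : ℤ) ≤ cycDist ℓ p q := by
  rw [cyc_eq hp hq, submod hp hq, submod hq hp]
  split_ifs <;> push_cast <;> omega

lemma cyc_twice {ℓ p q h : ℕ} (hle : (h : ℤ) ≤ cycDist ℓ p q) : 2 * h ≤ ℓ := by
  unfold cycDist at hle
  rw [le_min_iff] at hle
  have := abs_nonneg ((p:ℤ) - q)
  omega

/-- relative position of `p` with respect to basepoint `a` -/
def rel (ℓ a p : ℕ) : ℕ := (p + ℓ - a) % ℓ

lemma rel_lt {ℓ a p : ℕ} (hl : 0 < ℓ) : rel ℓ a p < ℓ := Nat.mod_lt _ hl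

lemma rel_inj {ℓ a p q : ℕ} (hp : p < ℓ) (hq : q < ℓ) (ha : a < ℓ)
    (hr : rel ℓ a p = rel ℓ a q) : p = q := by
  unfold rel at hr
  rw [submod hp ha, submod hq ha] at hr
  split_ifs at hr <;> omega

lemma rel_bounds {ℓ a p h : ℕ} (hp : p < ℓ) (ha : a < ℓ)
    (hle : (h : ℤ) ≤ cycDist ℓ p a) : h ≤ rel ℓ a p ∧ rel ℓ a p + h ≤ ℓ := by
  rw [cyc_eq hp ha, submod hp ha, submod ha hp] at hle
  unfold rel
  rw [submod hp ha]
  split_ifs at hle ⊢ <;> push_cast at hle <;> omega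

/-- translation invariance of the cyclic gap -/
lemma rel_shift {ℓ a p q : ℕ} (hp : p < ℓ) (hq : q < ℓ) (ha : a < ℓ) :
    (rel ℓ a p + ℓ - rel ℓ a q) % ℓ = (p + ℓ - q) % ℓ := by
  have h1 : rel ℓ a p < ℓ := rel_lt (by omega)
  have h2 : rel ℓ a q < ℓ := rel_lt (by omega)
  unfold rel at *
  rw [submod h1 h2, submod hp hq]
  rw [submod hp ha, submod hq ha] at *
  split_ifs <;> omega

lemma cyc_shift {ℓ a p q : ℕ} (hp : p < ℓ) (hq : q < ℓ) (ha : a < ℓ) :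
    cycDist ℓ (rel ℓ a p) (rel ℓ a q) = cycDist ℓ p q := by
  have h1 : rel ℓ a p < ℓ := rel_lt (by omega)
  have h2 : rel ℓ a q < ℓ := rel_lt (by omega)
  rw [cyc_eq hp hq, cyc_eq h1 h2, rel_shift hp hq ha, rel_shift hq hp ha]



variable {V : Type} {G : SimpleGraph V}

lemma exists_chain2 {u v : V} (hd : G.dist u v = 2) :
    ∃ m, G.Adj u m ∧ G.Adj m v := by
  have hne0 : G.dist u v ≠ 0 := by omega
  obtain ⟨p, hp⟩ := (Reachable.of_dist_ne_zero hne0).exists_walk_length_eq_dist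
  rw [hd] at hp
  refine ⟨p.getVert 1, ?_, ?_⟩
  · have := p.adj_getVert_succ (i := 0) (by omega)
    rwa [p.getVert_zero] at this
  · have := p.adj_getVert_succ (i := 1) (by omega)
    have h2 : p.getVert 2 = v := by rw [← hp, Walk.getVert_length]
    rwa [h2] at this

lemma exists_chain3 {u v : V} (hd : G.dist u v = 3) :
    ∃ x y, G.Adj u x ∧ G.Adj x y ∧ G.Adj y v := by
  have hne0 : G.dist u v ≠ 0 := by omega
  obtain ⟨p, hp⟩ := (Reachable.of_dist_ne_zero hne0).exists_walk_length_eq_dist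
  rw [hd] at hp
  refine ⟨p.getVert 1, p.getVert 2, ?_, ?_, ?_⟩
  · have := p.adj_getVert_succ (i := 0) (by omega)
    rwa [p.getVert_zero] at this
  · exact p.adj_getVert_succ (i := 1) (by omega)
  · have := p.adj_getVert_succ (i := 2) (by omega)
    have h2 : p.getVert 3 = v := by rw [← hp, Walk.getVert_length]
    rwa [h2] at this

lemma paths_eq' (hA : G.IsAcyclic) {x y : V} {p q : G.Walk x y}
    (hp : p.IsPath) (hq : q.IsPath) : p = q := by
  have := (isAcyclic_iff_path_unique.mp hA) (⟨p, hp⟩ : G.Path x y) ⟨q, hq⟩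
  exact congrArg Subtype.val this

lemma paths_len' (hA : G.IsAcyclic) {x y : V} {p q : G.Walk x y}
    (hp : p.IsPath) (hq : q.IsPath) : p.length = q.length :=
  congrArg Walk.length (paths_eq' hA hp hq)

/-- two distinct neighbours of a common vertex are at distance exactly 2 in a tree. -/
lemma dist_sibling (hA : G.IsAcyclic) {m v₁ v₂ : V}
    (h1 : G.Adj m v₁) (h2 : G.Adj m v₂) (hne : v₁ ≠ v₂) : G.dist v₁ v₂ = 2 := by
  have hw : (Walk.cons h1.symm (Walk.cons h2 Walk.nil) : G.Walk v₁ v₂).IsPath := by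
    simp [Walk.isPath_def, h1.ne, h1.ne', h2.ne, h2.ne', hne, hne.symm]
  have hle : G.dist v₁ v₂ ≤ 2 := by
    have := SimpleGraph.dist_le (Walk.cons h1.symm (Walk.cons h2 Walk.nil) : G.Walk v₁ v₂)
    simpa using this
  have h0 : G.dist v₁ v₂ ≠ 0 := by
    intro hz
    have := (Reachable.dist_eq_zero_iff ⟨Walk.cons h1.symm (Walk.cons h2 Walk.nil)⟩).mp hz
    exact hne this
  have hone : G.dist v₁ v₂ ≠ 1 := by
    intro h1'
    have hadj : G.Adj v₁ v₂ := dist_eq_one_iff_adj.mp h1'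
    have : (Walk.cons hadj Walk.nil : G.Walk v₁ v₂).IsPath := by simp [Walk.isPath_def, hadj.ne]
    have := paths_len' hA this hw
    simp at this
  omega

/-- `c – w – rr – j` with the indicated inequalities forces distance 3 in a tree. -/
lemma dist_three (hA : G.IsAcyclic) {c w rr j : V}
    (h1 : G.Adj c w) (h2 : G.Adj w rr) (h3 : G.Adj rr j)
    (hcr : c ≠ rr) (hwj : w ≠ j) : G.dist c j = 3 := by
  have hcj : c ≠ j := by
    intro hcj'
    have h3' : G.Adj rr c := hcj' ▸ h3
    have hp1 : (Walk.cons h2 (Walk.cons h3' Walk.nil) : G.Walk w c).IsPath := by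
      simp [Walk.isPath_def, h2.ne, h2.ne', h3'.ne, h3'.ne', hwj, h1.ne, h1.ne']
    have hp2 : (Walk.cons h1.symm Walk.nil : G.Walk w c).IsPath := by
      simp [Walk.isPath_def, h1.ne, h1.ne']
    have := paths_len' hA hp1 hp2
    simp at this
  have hw : (Walk.cons h1 (Walk.cons h2 (Walk.cons h3 Walk.nil)) : G.Walk c j).IsPath := by
    simp [Walk.isPath_def, h1.ne, h1.ne', h2.ne, h2.ne', h3.ne, h3.ne', hcr, hcr.symm, hwj, hwj.symm, hcj, hcj.symm]
  have hle : G.dist c j ≤ 3 := by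
    have := SimpleGraph.dist_le (Walk.cons h1 (Walk.cons h2 (Walk.cons h3 Walk.nil)) : G.Walk c j)
    simpa using this
  have h0 : G.dist c j ≠ 0 := by
    intro hz
    exact hcj ((Reachable.dist_eq_zero_iff
      ⟨Walk.cons h1 (Walk.cons h2 (Walk.cons h3 Walk.nil))⟩).mp hz)
  have hone : G.dist c j ≠ 1 := by
    intro h1'
    have hadj : G.Adj c j := dist_eq_one_iff_adj.mp h1'
    have hp2 : (Walk.cons hadj Walk.nil : G.Walk c j).IsPath := by
      simp [Walk.isPath_def, hcj, hcj.symm]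
    have := paths_len' hA hw hp2
    simp at this
  have htwo : G.dist c j ≠ 2 := by
    intro h2'
    obtain ⟨m, hm1, hm2⟩ := exists_chain2 h2'
    have hp2 : (Walk.cons hm1 (Walk.cons hm2 Walk.nil) : G.Walk c j).IsPath := by
      simp [Walk.isPath_def, hm1.ne, hm1.ne', hm2.ne, hm2.ne', hcj, hcj.symm]
    have := paths_len' hA hw hp2
    simp at this
  omega


lemma cyc_ne {ℓ p q : ℕ} (hle : (1 : ℤ) ≤ cycDist ℓ p q) : p ≠ q := by
  rintro rfl
  unfold cycDist at hle
  rw [le_min_iff] at hle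
  simp only [sub_self, abs_zero] at hle
  omega

lemma cyc_ge' {ℓ p q h : ℕ} (hp : p < ℓ) (hq : q < ℓ) (h1 : q + h ≤ p) (h2 : p + h ≤ ℓ + q) :
    (h : ℤ) ≤ cycDist ℓ p q := by
  rw [cyc_eq hp hq, submod hp hq, submod hq hp]
  split_ifs <;> push_cast <;> omega


variable {V : Type} {G : SimpleGraph V}


lemma paths_eq (hA : G.IsAcyclic) {x y : V} {p q : G.Walk x y}
    (hp : p.IsPath) (hq : q.IsPath) : p = q := by
  have := (isAcyclic_iff_path_unique.mp hA) (⟨p, hp⟩ : G.Path x y) ⟨q, hq⟩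
  exact congrArg Subtype.val this

lemma paths_len (hA : G.IsAcyclic) {x y : V} {p q : G.Walk x y}
    (hp : p.IsPath) (hq : q.IsPath) : p.length = q.length :=
  congrArg Walk.length (paths_eq hA hp hq)

variable (G) in
/-- the chosen path from `r` to `u` (a geodesic). -/
noncomputable def pth (hc : G.Connected) (r u : V) : G.Walk r u :=
  ((hc r u).exists_path_of_dist).choose

lemma pth_isPath (hc : G.Connected) (r u : V) : (pth G hc r u).IsPath :=
  ((hc r u).exists_path_of_dist).choose_spec.1

lemma pth_length (hc : G.Connected) (r u : V) : (pth G hc r u).length = G.dist r u :=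
  ((hc r u).exists_path_of_dist).choose_spec.2

variable (G) in
/-- the parent of `u` in the tree rooted at `r`. -/
noncomputable def parent (hc : G.Connected) (r u : V) : V :=
  (pth G hc r u).getVert (G.dist r u - 1)

lemma dist_pos (hc : G.Connected) {r u : V} (hne : u ≠ r) : 0 < G.dist r u := by
  rcases Nat.eq_zero_or_pos (G.dist r u) with h0 | h; swap
  · exact h
  · exact absurd ((hc r u).dist_eq_zero_iff.mp h0).symm hne

lemma adj_parent (hc : G.Connected) {r u : V} (hne : u ≠ r) :
    G.Adj (parent G hc r u) u := by
  have hpos := dist_pos hc hne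
  have h1 : G.dist r u - 1 < (pth G hc r u).length := by rw [pth_length]; omega
  have h2 := (pth G hc r u).adj_getVert_succ h1
  have h3 : (pth G hc r u).getVert (G.dist r u - 1 + 1) = u := by
    rw [(by omega : G.dist r u - 1 + 1 = G.dist r u), ← pth_length hc r u, Walk.getVert_length]
  rw [h3] at h2
  exact h2

lemma support_dist_le (hc : G.Connected) {r u x : V} (hx : x ∈ (pth G hc r u).support) :
    G.dist r x + G.dist x u ≤ G.dist r u := by
  classical
  have hsp := Walk.take_spec (pth G hc r u) hx
  have hlen := congrArg Walk.length hsp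
  rw [Walk.length_append, pth_length] at hlen
  have h1 := SimpleGraph.dist_le ((pth G hc r u).takeUntil x hx)
  have h2 := SimpleGraph.dist_le ((pth G hc r u).dropUntil x hx)
  omega

lemma dist_parent (hc : G.Connected) (hA : G.IsAcyclic) {r u : V} (hne : u ≠ r) :
    G.dist r (parent G hc r u) = G.dist r u - 1 := by
  have hpos := dist_pos hc hne
  have hadj := adj_parent hc hne
  have hmem : parent G hc r u ∈ (pth G hc r u).support := by
    rw [Walk.mem_support_iff_exists_getVert]
    exact ⟨G.dist r u - 1, rfl, by rw [pth_length]; omega⟩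
  have h1 := support_dist_le hc hmem
  have h2 : G.dist (parent G hc r u) u = 1 := dist_eq_one_iff_adj.mpr hadj
  have h3 := hc.dist_triangle (u := r) (v := parent G hc r u) (w := u)
  have h4 : G.dist (parent G hc r u) u = 1 := h2
  omega

lemma concat_isPath {x y z : V} {p : G.Walk x y} (hp : p.IsPath) (hadj : G.Adj y z)
    (hz : z ∉ p.support) : (p.concat hadj).IsPath := by
  rw [Walk.isPath_def, Walk.support_concat]
  exact ((Walk.isPath_def p).mp hp).append (List.nodup_singleton z) (by simpa using hz)

lemma not_mem_pth_support (hc : G.Connected) {r u x : V}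
    (hd : G.dist r u + 1 ≤ G.dist r x + G.dist x u) : x ∉ (pth G hc r u).support := by
  intro hmem
  have := support_dist_le hc hmem
  omega

/-- if `w` is adjacent to `u` and one level higher, then `w` is THE parent of `u`. -/
lemma parent_unique (hc : G.Connected) (hA : G.IsAcyclic) {r u w : V}
    (hadj : G.Adj w u) (hd : G.dist r w + 1 = G.dist r u) :
    parent G hc r u = w := by
  have hne : u ≠ w := hadj.ne'
  have hmem : u ∉ (pth G hc r w).support := by
    apply not_mem_pth_support hc
    have h2 : G.dist u w = 1 := dist_eq_one_iff_adj.mpr hadj.symm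
    omega
  set p' : G.Walk r u := (pth G hc r w).concat hadj with hp'
  have hpath : p'.IsPath := concat_isPath (pth_isPath hc r w) hadj hmem
  have heq : pth G hc r u = p' := paths_eq hA (pth_isPath hc r u) hpath
  unfold parent
  rw [heq, hp', Walk.concat, Walk.getVert_append]
  rw [pth_length, if_neg (by omega)]
  rw [(by omega : G.dist r u - 1 - G.dist r w = 0)]
  rfl

lemma adj_dist_ne (hc : G.Connected) (hA : G.IsAcyclic) {r u v : V}
    (hadj : G.Adj u v) : G.dist r u ≠ G.dist r v := by
  intro heq
  by_cases hmem : v ∈ (pth G hc r u).support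
  · have h1 := support_dist_le hc hmem
    have h2 : G.dist v u = 1 := dist_eq_one_iff_adj.mpr hadj.symm
    omega
  · have hpath : ((pth G hc r u).concat hadj).IsPath :=
      concat_isPath (pth_isPath hc r u) hadj hmem
    have := paths_len hA (pth_isPath hc r v) hpath
    rw [Walk.length_concat, pth_length, pth_length] at this
    omega

/-- adjacency dichotomy in the rooted tree -/
lemma adj_dichotomy (hc : G.Connected) (hA : G.IsAcyclic) {r u v : V}
    (hadj : G.Adj u v) :
    (parent G hc r v = u ∧ G.dist r v = G.dist r u + 1) ∨
    (parent G hc r u = v ∧ G.dist r u = G.dist r v + 1) := by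
  have hne := adj_dist_ne hc hA (r := r) hadj
  have h1 : G.dist u v = 1 := dist_eq_one_iff_adj.mpr hadj
  have h2 := hc.dist_triangle (u := r) (v := u) (w := v)
  have h3 := hc.dist_triangle (u := r) (v := v) (w := u)
  rw [SimpleGraph.dist_comm (u := v) (v := u)] at h3
  rcases lt_or_gt_of_ne hne with hlt | hgt
  · left
    have hd : G.dist r u + 1 = G.dist r v := by omega
    exact ⟨parent_unique hc hA hadj hd, hd.symm⟩
  · right
    have hd : G.dist r v + 1 = G.dist r u := by omega
    exact ⟨parent_unique hc hA hadj.symm hd, hd.symm⟩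


end Aux
namespace Aux


lemma lower_bound {V : Type} [Fintype V] (G : SimpleGraph V) [DecidableRel G.Adj]
    (hT : G.IsTree) {Δ h : ℕ} (r : V) (hdeg : G.degree r = Δ)
    (hnb : ∀ v, G.Adj r v → G.degree v = Δ) (hh : 1 ≤ h) (hhD : h ≤ Δ)
    {ℓ : ℕ} {f : V → ℕ} (hl : 0 < ℓ) (hlab : IsCLabelling G h 1 ℓ f) :
    h + 2 * Δ - 1 ≤ ℓ := by
  classical
  by_contra hcon
  push_neg at hcon
  have hℓ2 : ℓ + 2 ≤ h + 2 * Δ := by omega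
  obtain ⟨hflt, hd1, hd23⟩ := hlab
  have hA := hT.IsAcyclic
  set N := G.neighborFinset r with hNdef
  have hNcard : N.card = Δ := by rw [hNdef, card_neighborFinset_eq_degree, hdeg]
  have hadjN : ∀ x ∈ N, G.Adj r x := fun x hx => by
    rwa [hNdef, mem_neighborFinset] at hx
  set a := f r with ha
  -- cyclic distance of neighbours to the root label
  have hxr : ∀ x ∈ N, (h : ℤ) ≤ cycDist ℓ (f x) a := by
    intro x hx
    exact hd1 x r (dist_eq_one_iff_adj.mpr (hadjN x hx).symm)
  have hga : ∀ x ∈ N, h ≤ rel ℓ a (f x) ∧ rel ℓ a (f x) + h ≤ ℓ := by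
    intro x hx
    exact rel_bounds (hflt x) (hflt r) (hxr x hx)
  -- N is nonempty
  have hNne : N.Nonempty := by
    rw [← Finset.card_pos, hNcard]; omega
  have h2h : 2 * h ≤ ℓ := by
    obtain ⟨v0, hv0⟩ := hNne
    exact cyc_twice (hxr v0 hv0)
  -- siblings have distinct labels
  have hsib : ∀ m x y : V, G.Adj m x → G.Adj m y → x ≠ y → f x ≠ f y := by
    intro m x y h1 h2 hne
    exact cyc_ne (by exact_mod_cast hd23 x y (Or.inl (dist_sibling hA h1 h2 hne)))
  -- pick the neighbour with minimal relative position
  obtain ⟨w, hwN, hwmin⟩ := Finset.exists_min_image N (fun x => rel ℓ a (f x)) hNne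
  have hadjw : G.Adj r w := hadjN w hwN
  -- children of w
  set C := (G.neighborFinset w).erase r with hC
  have hCcard : C.card = Δ - 1 := by
    have hrmem : r ∈ G.neighborFinset w := by rw [mem_neighborFinset]; exact hadjw.symm
    rw [hC, Finset.card_erase_of_mem hrmem, card_neighborFinset_eq_degree, hnb w hadjw]
  have hCadj : ∀ c ∈ C, G.Adj w c ∧ c ≠ r := by
    intro c hc
    rw [hC, Finset.mem_erase, mem_neighborFinset] at hc
    exact ⟨hc.2, hc.1⟩
  -- relative positions with respect to f w
  have hψinj : ∀ x y : V, f x ≠ f y → rel ℓ (f w) (f x) ≠ rel ℓ (f w) (f y) := by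
    intro x y hne he
    exact hne (rel_inj (hflt x) (hflt y) (hflt w) he)
  have hginj : ∀ x y : V, f x ≠ f y → rel ℓ a (f x) ≠ rel ℓ a (f y) := by
    intro x y hne he
    exact hne (rel_inj (hflt x) (hflt y) (hflt r) he)
  -- far and near neighbours of the root
  set Far := (N.erase w).filter (fun x => rel ℓ a (f w) + h ≤ rel ℓ a (f x)) with hFar
  set Near := (N.erase w).filter (fun x => ¬ (rel ℓ a (f w) + h ≤ rel ℓ a (f x))) with hNear
  have hsplit : Far.card + Near.card = Δ - 1 := by
    rw [hFar, hNear, Finset.card_filter_add_card_filter_not,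
      Finset.card_erase_of_mem hwN, hNcard]
  have hFarmem : ∀ j ∈ Far, j ∈ N ∧ j ≠ w ∧ rel ℓ a (f w) + h ≤ rel ℓ a (f j) := by
    intro j hj
    rw [hFar, Finset.mem_filter, Finset.mem_erase] at hj
    exact ⟨hj.1.2, hj.1.1, hj.2⟩
  have hNearmem : ∀ j ∈ Near, j ∈ N ∧ j ≠ w ∧ rel ℓ a (f j) < rel ℓ a (f w) + h := by
    intro j hj
    rw [hNear, Finset.mem_filter, Finset.mem_erase] at hj
    exact ⟨hj.1.2, hj.1.1, by omega⟩
  -- far neighbours are cyclically far from w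
  have hFarcyc : ∀ j ∈ Far, (h : ℤ) ≤ cycDist ℓ (f j) (f w) := by
    intro j hj
    obtain ⟨hjN, hjw, hgj⟩ := hFarmem j hj
    have := cyc_shift (a := a) (hflt j) (hflt w) (hflt r)
    rw [← this]
    refine cyc_ge' (rel_lt hl) (rel_lt hl) hgj ?_
    have := (hga j hjN).2
    omega
  -- the target set of the counting argument
  have hIccmem : ∀ x : V, (h:ℤ) ≤ cycDist ℓ (f x) (f w) → rel ℓ (f w) (f x) ∈ Finset.Icc h (ℓ - h) := by
    intro x hx
    have := rel_bounds (hflt x) (hflt w) hx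
    rw [Finset.mem_Icc]
    omega
  have hrw : (h : ℤ) ≤ cycDist ℓ a (f w) := hd1 r w (dist_eq_one_iff_adj.mpr hadjw)
  have hrIcc : rel ℓ (f w) a ∈ Finset.Icc h (ℓ - h) := hIccmem r hrw
  have hFarIcc : ∀ j ∈ Far, rel ℓ (f w) (f j) ∈ Finset.Icc h (ℓ - h) := fun j hj =>
    hIccmem j (hFarcyc j hj)
  -- labels of children avoid rel ℓ (f w) a and ψ of far neighbours
  have hfcr : ∀ c ∈ C, f c ≠ a := by
    intro c hc
    exact hsib w c r (hCadj c hc).1 hadjw.symm (hCadj c hc).2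
  have hfcj : ∀ c ∈ C, ∀ j ∈ Far, f c ≠ f j := by
    intro c hc j hj
    obtain ⟨hcw, hcr⟩ := hCadj c hc
    obtain ⟨hjN, hjw, _⟩ := hFarmem j hj
    have hdist : G.dist c j = 3 :=
      dist_three hA hcw.symm hadjw.symm (hadjN j hjN) hcr (Ne.symm hjw)
    exact cyc_ne (by exact_mod_cast hd23 c j (Or.inr hdist))
  have hfrj : ∀ j ∈ Far, a ≠ f j := by
    intro j hj
    obtain ⟨hjN, _, _⟩ := hFarmem j hj
    exact fun he => cyc_ne (le_trans (by exact_mod_cast hh) (hxr j hjN)) he.symm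
  -- the injective map of children into the target
  set T := (Finset.Icc h (ℓ - h)) \ (insert (rel ℓ (f w) a) (Far.image (fun x => rel ℓ (f w) (f x)))) with hT'
  have hmaps : ∀ c ∈ C, rel ℓ (f w) (f c) ∈ T := by
    intro c hc
    obtain ⟨hcw, hcr⟩ := hCadj c hc
    rw [hT', Finset.mem_sdiff]
    constructor
    · exact hIccmem c (hd1 c w (dist_eq_one_iff_adj.mpr hcw.symm))
    · rw [Finset.mem_insert]
      push_neg
      constructor
      · exact hψinj c r (hfcr c hc)
      · intro hmem
        rw [Finset.mem_image] at hmem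
        obtain ⟨j, hj, hje⟩ := hmem
        exact hψinj c j (hfcj c hc j hj) hje.symm
  have hinjC : Set.InjOn (fun x => rel ℓ (f w) (f x)) C := by
    intro x hx y hy hxy
    by_contra hne
    exact hψinj x y (hsib w x y (hCadj x hx).1 (hCadj y hy).1 hne) hxy
  have hcount := Finset.card_le_card_of_injOn _ hmaps hinjC
  -- compute the cardinality of T
  have hsub : insert (rel ℓ (f w) a) (Far.image (fun x => rel ℓ (f w) (f x))) ⊆ Finset.Icc h (ℓ - h) := by
    intro x hx
    rw [Finset.mem_insert] at hx
    rcases hx with rfl | hx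
    · exact hrIcc
    · rw [Finset.mem_image] at hx
      obtain ⟨j, hj, rfl⟩ := hx
      exact hFarIcc j hj
  have hnotmem : rel ℓ (f w) a ∉ Far.image (fun x => rel ℓ (f w) (f x)) := by
    rw [Finset.mem_image]
    rintro ⟨j, hj, hje⟩
    exact hψinj r j (hfrj j hj) hje.symm
  have hinjFar : Set.InjOn (fun x => rel ℓ (f w) (f x)) Far := by
    intro x hx y hy hxy
    by_contra hne
    obtain ⟨hxN, _, _⟩ := hFarmem x hx
    obtain ⟨hyN, _, _⟩ := hFarmem y hy
    exact hψinj x y (hsib r x y (hadjN x hxN) (hadjN y hyN) hne) hxy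
  have hTcard : T.card = (ℓ - h + 1 - h) - (Far.card + 1) := by
    rw [hT', Finset.card_sdiff_of_subset hsub, Finset.card_insert_of_notMem hnotmem,
      Finset.card_image_of_injOn hinjFar, Nat.card_Icc]
  rw [hCcard, hTcard] at hcount
  -- hence Near has at least h elements
  have hNearh : h ≤ Near.card := by omega
  -- but Near maps injectively into an interval of size h - 1
  have hmaps2 : ∀ j ∈ Near, rel ℓ a (f j) ∈ Finset.Ico (rel ℓ a (f w) + 1) (rel ℓ a (f w) + h) := by
    intro j hj
    obtain ⟨hjN, hjw, hgj⟩ := hNearmem j hj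
    have hne : rel ℓ a (f j) ≠ rel ℓ a (f w) := hginj j w (hsib r j w (hadjN j hjN) hadjw hjw)
    have hmin := hwmin j hjN
    rw [Finset.mem_Ico]
    omega
  have hinjNear : Set.InjOn (fun x => rel ℓ a (f x)) Near := by
    intro x hx y hy hxy
    by_contra hne
    obtain ⟨hxN, _, _⟩ := hNearmem x hx
    obtain ⟨hyN, _, _⟩ := hNearmem y hy
    exact hginj x y (hsib r x y (hadjN x hxN) (hadjN y hyN) hne) hxy
  have hcount2 := Finset.card_le_card_of_injOn _ hmaps2 hinjNear
  rw [Nat.card_Ico] at hcount2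
  omega



section Construction

variable {V : Type} [Fintype V] (G : SimpleGraph V) [DecidableRel G.Adj] (r : V)

variable (hc : G.Connected)

/-- order embedding of the vertex set into ℕ -/
noncomputable def ord : V → ℕ := fun v => ((Fintype.equivFin V) v : ℕ)

lemma ord_inj {x y : V} (hxy : ord x = ord y) : x = y := by
  unfold ord at hxy
  exact (Fintype.equivFin V).injective (Fin.ext hxy)

open Classical in
/-- the children of `u` in the tree rooted at `r` -/
noncomputable def children (u : V) : Finset V :=
  (G.neighborFinset u).filter (fun x => G.dist r x = G.dist r u + 1)

lemma mem_children {u c : V} :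
    c ∈ children G r u ↔ G.Adj u c ∧ G.dist r c = G.dist r u + 1 := by
  classical
  rw [children]
  simp [mem_neighborFinset]

/-- plain rank of a child among the children -/
noncomputable def slot0 (u c : V) : ℕ :=
  ((children G r u).filter (fun x => ord x < ord c)).card

lemma slot0_lt_card {u c : V} (hc' : c ∈ children G r u) :
    slot0 G r u c < (children G r u).card := by
  apply Finset.card_lt_card
  constructor
  · exact Finset.filter_subset _ _
  · intro hsub
    have := hsub hc'
    simp at this

lemma slot0_inj {u c c' : V} (h1 : c ∈ children G r u) (h2 : c' ∈ children G r u)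
    (he : slot0 G r u c = slot0 G r u c') : c = c' := by
  rcases lt_trichotomy (ord c) (ord c') with hlt | heq | hlt
  · exfalso
    have hss : (children G r u).filter (fun x => ord x < ord c) ⊂
        (children G r u).filter (fun x => ord x < ord c') := by
      constructor
      · intro x hx
        rw [Finset.mem_filter] at hx ⊢
        exact ⟨hx.1, lt_trans hx.2 hlt⟩
      · intro hsub
        have := hsub (Finset.mem_filter.mpr ⟨h1, hlt⟩)
        rw [Finset.mem_filter] at this
        simp at this
    have := Finset.card_lt_card hss
    unfold slot0 at he
    omega
  · exact ord_inj heq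
  · exfalso
    have hss : (children G r u).filter (fun x => ord x < ord c') ⊂
        (children G r u).filter (fun x => ord x < ord c) := by
      constructor
      · intro x hx
        rw [Finset.mem_filter] at hx ⊢
        exact ⟨hx.1, lt_trans hx.2 hlt⟩
      · intro hsub
        have := hsub (Finset.mem_filter.mpr ⟨h2, hlt⟩)
        rw [Finset.mem_filter] at this
        simp at this
    have := Finset.card_lt_card hss
    unfold slot0 at he
    omega

open Classical in
/-- the slot of a child, skipping the parent's slot `p` when `u` is not the root -/
noncomputable def slot (u : V) (p : ℕ) (c : V) : ℕ :=
  if u = r then slot0 G r u c else if slot0 G r u c < p then slot0 G r u c else slot0 G r u c + 1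

lemma slot_ne {u c : V} {p : ℕ} (hne : u ≠ r) : slot G r u p c ≠ p := by
  unfold slot
  rw [if_neg hne]
  split_ifs with hlt <;> omega

lemma slot_inj {u c c' : V} {p : ℕ} (h1 : c ∈ children G r u) (h2 : c' ∈ children G r u)
    (he : slot G r u p c = slot G r u p c') : c = c' := by
  unfold slot at he
  apply slot0_inj G r h1 h2
  split_ifs at he <;> omega


variable (h Δ : ℕ)


/-- the labelling recursion: value, interval start offset, parent slot -/
noncomputable def lab : ℕ → V → ℕ × ℕ × ℕ
  | 0, _ => (0, h, 0)
  | (n+1), u =>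
    let q := lab n (parent G hc r u)
    let s := slot G r (parent G hc r u) q.2.2 u
    ((q.1 + q.2.1 + s) % (h + 2*Δ - 1), (Δ - s) + (s - (Δ - h)),
      (Δ + h - 1) - (q.2.1 + (s - (Δ - h))))

noncomputable def fl (u : V) : ℕ := (lab G r hc h Δ (G.dist r u) u).1
noncomputable def kl (u : V) : ℕ := (lab G r hc h Δ (G.dist r u) u).2.1
noncomputable def pl (u : V) : ℕ := (lab G r hc h Δ (G.dist r u) u).2.2

lemma fl_root : fl G r hc h Δ r = 0 := by unfold fl; rw [SimpleGraph.dist_self]; simp [lab]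
lemma kl_root : kl G r hc h Δ r = h := by unfold kl; rw [SimpleGraph.dist_self]; simp [lab]
lemma pl_root : pl G r hc h Δ r = 0 := by unfold pl; rw [SimpleGraph.dist_self]; simp [lab]

lemma lab_step (hA : G.IsAcyclic) {u : V} (hne : u ≠ r) :
    fl G r hc h Δ u =
      (fl G r hc h Δ (parent G hc r u) + kl G r hc h Δ (parent G hc r u) +
        slot G r (parent G hc r u) (pl G r hc h Δ (parent G hc r u)) u) % (h + 2*Δ - 1) ∧
    kl G r hc h Δ u =
      (Δ - slot G r (parent G hc r u) (pl G r hc h Δ (parent G hc r u)) u) +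
        (slot G r (parent G hc r u) (pl G r hc h Δ (parent G hc r u)) u - (Δ - h)) ∧
    pl G r hc h Δ u =
      (Δ + h - 1) - (kl G r hc h Δ (parent G hc r u) +
        (slot G r (parent G hc r u) (pl G r hc h Δ (parent G hc r u)) u - (Δ - h))) := by
  have hpos := dist_pos hc hne
  have hw : G.dist r (parent G hc r u) = G.dist r u - 1 := dist_parent hc hA hne
  unfold fl kl pl
  rw [hw]
  obtain ⟨n, hn⟩ : ∃ n, G.dist r u = n + 1 := ⟨G.dist r u - 1, by omega⟩
  rw [hn]
  simp only [Nat.add_sub_cancel, lab]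
  exact ⟨trivial, trivial, trivial⟩


include hc in
lemma children_card_lt (hA : G.IsAcyclic) (hdeg : ∀ v, G.degree v ≤ Δ) {u : V} (hne : u ≠ r) :
    (children G r u).card < Δ := by
  have hss : children G r u ⊂ G.neighborFinset u := by
    constructor
    · intro x hx
      exact (Finset.mem_filter.mp (by classical exact hx)).1
    · intro hsub
      have hpar : parent G hc r u ∈ G.neighborFinset u := by
        rw [mem_neighborFinset]
        exact (adj_parent hc hne).symm
      have := hsub hpar
      rw [mem_children] at this
      have hw := dist_parent hc hA hne
      have hpos := dist_pos hc hne
      omega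
  have h1 := Finset.card_lt_card hss
  have h2 := hdeg u
  rw [card_neighborFinset_eq_degree] at h1
  omega

omit hc in
lemma children_card_le (hdeg : ∀ v, G.degree v ≤ Δ) (u : V) :
    (children G r u).card ≤ Δ := by
  have h1 : children G r u ⊆ G.neighborFinset u := by
    intro x hx
    exact (Finset.mem_filter.mp (by classical exact hx)).1
  have := Finset.card_le_card h1
  rw [card_neighborFinset_eq_degree] at this
  exact le_trans this (hdeg u)

include hc in
lemma slot_lt (hA : G.IsAcyclic) (hdeg : ∀ v, G.degree v ≤ Δ) {u c : V} {p : ℕ}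
    (hmem : c ∈ children G r u) : slot G r u p c < Δ := by
  have h0 := slot0_lt_card G r hmem
  unfold slot
  split_ifs with h1 h2
  · have := children_card_le G r Δ hdeg u
    omega
  · have := children_card_lt G r hc Δ hA hdeg h1
    omega
  · have := children_card_lt G r hc Δ hA hdeg h1
    omega

lemma inv (hA : G.IsAcyclic) (hh : 1 ≤ h) (hhD : h ≤ Δ) (hdeg : ∀ v, G.degree v ≤ Δ) :
    ∀ n (u : V), G.dist r u = n →
      fl G r hc h Δ u < h + 2*Δ - 1 ∧ h ≤ kl G r hc h Δ u ∧ kl G r hc h Δ u ≤ Δ ∧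
        pl G r hc h Δ u + 1 ≤ Δ := by
  intro n
  induction n with
  | zero =>
    intro u hu
    have : r = u := (hc r u).dist_eq_zero_iff.mp hu
    subst this
    rw [fl_root, kl_root, pl_root]
    omega
  | succ n ih =>
    intro u hu
    have hne : u ≠ r := by
      intro he
      rw [he, SimpleGraph.dist_self] at hu
      omega
    have hw := dist_parent hc hA hne
    have hIH := ih (parent G hc r u) (by omega)
    obtain ⟨h1, h2, h3⟩ := lab_step G r hc h Δ hA hne
    have hmem : u ∈ children G r (parent G hc r u) :=
      (mem_children G r).mpr ⟨adj_parent hc hne, by omega⟩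
    have hs := slot_lt G r hc Δ hA hdeg (p := pl G r hc h Δ (parent G hc r u)) hmem
    refine ⟨?_, ?_, ?_, ?_⟩
    · rw [h1]; exact Nat.mod_lt _ (by omega)
    · rw [h2]; omega
    · rw [h2]; omega
    · rw [h3]; omega

lemma inv' (hA : G.IsAcyclic) (hh : 1 ≤ h) (hhD : h ≤ Δ) (hdeg : ∀ v, G.degree v ≤ Δ) (u : V) :
    fl G r hc h Δ u < h + 2*Δ - 1 ∧ h ≤ kl G r hc h Δ u ∧ kl G r hc h Δ u ≤ Δ ∧
      pl G r hc h Δ u + 1 ≤ Δ :=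
  inv G r hc h Δ hA hh hhD hdeg (G.dist r u) u rfl

lemma pos_parent (hA : G.IsAcyclic) (hh : 1 ≤ h) (hhD : h ≤ Δ) (hdeg : ∀ v, G.degree v ≤ Δ)
    {u : V} (hne : u ≠ r) :
    (fl G r hc h Δ (parent G hc r u) : ZMod (h + 2*Δ - 1)) =
      (fl G r hc h Δ u : ZMod (h + 2*Δ - 1)) +
        ((kl G r hc h Δ u + pl G r hc h Δ u : ℕ) : ZMod (h + 2*Δ - 1)) := by
  obtain ⟨h1, h2, h3⟩ := lab_step G r hc h Δ hA hne
  have hinvw := inv' G r hc h Δ hA hh hhD hdeg (parent G hc r u)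
  have hmem : u ∈ children G r (parent G hc r u) := by
    have hw := dist_parent hc hA hne
    have hpos := dist_pos hc hne
    exact (mem_children G r).mpr ⟨adj_parent hc hne, by omega⟩
  have hs := slot_lt G r hc Δ hA hdeg (p := pl G r hc h Δ (parent G hc r u)) hmem
  have hL : kl G r hc h Δ u + pl G r hc h Δ u +
      (kl G r hc h Δ (parent G hc r u) +
        slot G r (parent G hc r u) (pl G r hc h Δ (parent G hc r u)) u) = h + 2*Δ - 1 := by
    rw [h2, h3]
    omega
  rw [h1, ZMod.natCast_mod]
  have hz : ((kl G r hc h Δ u + pl G r hc h Δ u +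
      (kl G r hc h Δ (parent G hc r u) +
        slot G r (parent G hc r u) (pl G r hc h Δ (parent G hc r u)) u) : ℕ) :
      ZMod (h + 2*Δ - 1)) = 0 := by
    rw [hL]; exact ZMod.natCast_self _
  push_cast at hz ⊢
  linear_combination -hz

lemma pos_child (hA : G.IsAcyclic) {u c : V} (hmem : c ∈ children G r u) :
    (fl G r hc h Δ c : ZMod (h + 2*Δ - 1)) =
      (fl G r hc h Δ u : ZMod (h + 2*Δ - 1)) +
        ((kl G r hc h Δ u + slot G r u (pl G r hc h Δ u) c : ℕ) : ZMod (h + 2*Δ - 1)) := by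
  obtain ⟨hadj, hd⟩ := (mem_children G r).mp hmem
  have hne : c ≠ r := by
    intro he
    rw [he, SimpleGraph.dist_self] at hd
    omega
  have hp : parent G hc r c = u := parent_unique hc hA hadj (by omega)
  obtain ⟨h1, _, _⟩ := lab_step G r hc h Δ hA hne
  rw [hp] at h1
  rw [h1, ZMod.natCast_mod]
  push_cast
  ring

open Classical in
noncomputable def slotOf (u x : V) : ℕ :=
  if G.dist r x = G.dist r u + 1 then slot G r u (pl G r hc h Δ u) x else pl G r hc h Δ u

lemma pos_nbr (hA : G.IsAcyclic) (hh : 1 ≤ h) (hhD : h ≤ Δ) (hdeg : ∀ v, G.degree v ≤ Δ)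
    {u x : V} (hadj : G.Adj u x) :
    (fl G r hc h Δ x : ZMod (h + 2*Δ - 1)) =
      (fl G r hc h Δ u : ZMod (h + 2*Δ - 1)) +
        ((kl G r hc h Δ u + slotOf G r hc h Δ u x : ℕ) : ZMod (h + 2*Δ - 1)) ∧
    slotOf G r hc h Δ u x < Δ := by
  classical
  rcases adj_dichotomy hc hA (r := r) hadj with ⟨hp, hd⟩ | ⟨hp, hd⟩
  · have hmem : x ∈ children G r u := (mem_children G r).mpr ⟨hadj, hd⟩
    have hs : slotOf G r hc h Δ u x = slot G r u (pl G r hc h Δ u) x := by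
      unfold slotOf
      rw [if_pos hd]
    rw [hs]
    exact ⟨pos_child G r hc h Δ hA hmem, slot_lt G r hc Δ hA hdeg hmem⟩
  · have hne : u ≠ r := by
      intro he
      rw [he, SimpleGraph.dist_self] at hd
      omega
    have hs : slotOf G r hc h Δ u x = pl G r hc h Δ u := by
      unfold slotOf
      rw [if_neg (by omega)]
    rw [hs]
    refine ⟨?_, by have := (inv' G r hc h Δ hA hh hhD hdeg u).2.2.2; omega⟩
    rw [← hp]
    exact pos_parent G r hc h Δ hA hh hhD hdeg hne

lemma slotOf_inj (hA : G.IsAcyclic) {u x y : V} (hx : G.Adj u x) (hy : G.Adj u y)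
    (hne : x ≠ y) : slotOf G r hc h Δ u x ≠ slotOf G r hc h Δ u y := by
  classical
  rcases adj_dichotomy hc hA (r := r) hx with ⟨hpx, hdx⟩ | ⟨hpx, hdx⟩ <;>
    rcases adj_dichotomy hc hA (r := r) hy with ⟨hpy, hdy⟩ | ⟨hpy, hdy⟩
  · have hmx : x ∈ children G r u := (mem_children G r).mpr ⟨hx, hdx⟩
    have hmy : y ∈ children G r u := (mem_children G r).mpr ⟨hy, hdy⟩
    unfold slotOf
    rw [if_pos hdx, if_pos hdy]
    intro he
    exact hne (slot_inj G r hmx hmy he)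
  · have hur : u ≠ r := by
      intro he
      rw [he, SimpleGraph.dist_self] at hdy
      omega
    have hmx : x ∈ children G r u := (mem_children G r).mpr ⟨hx, hdx⟩
    unfold slotOf
    rw [if_pos hdx, if_neg (by omega)]
    exact slot_ne G r hur
  · have hur : u ≠ r := by
      intro he
      rw [he, SimpleGraph.dist_self] at hdx
      omega
    have hmy : y ∈ children G r u := (mem_children G r).mpr ⟨hy, hdy⟩
    unfold slotOf
    rw [if_neg (by omega), if_pos hdy]
    exact fun he => (slot_ne G r hur) he.symm
  · exfalso
    exact hne (hpx.symm.trans hpy)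

lemma edge_cyc (hA : G.IsAcyclic) (hh : 1 ≤ h) (hhD : h ≤ Δ) (hdeg : ∀ v, G.degree v ≤ Δ)
    {u c : V} (hmem : c ∈ children G r u) :
    (h : ℤ) ≤ cycDist (h + 2*Δ - 1) (fl G r hc h Δ u) (fl G r hc h Δ c) := by
  obtain ⟨hadj, hd⟩ := (mem_children G r).mp hmem
  have hne : c ≠ r := by
    intro hcr; rw [hcr, SimpleGraph.dist_self] at hd; omega
  have hp : parent G hc r c = u := parent_unique hc hA hadj (by omega)
  obtain ⟨h1, _, _⟩ := lab_step G r hc h Δ hA hne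
  rw [hp] at h1
  have hs := slot_lt G r hc Δ hA hdeg (p := pl G r hc h Δ u) hmem
  have hinv := inv' G r hc h Δ hA hh hhD hdeg u
  have h1' : fl G r hc h Δ c =
      (fl G r hc h Δ u + (kl G r hc h Δ u + slot G r u (pl G r hc h Δ u) c)) %
        (h + 2*Δ - 1) := by rw [h1, Nat.add_assoc]
  rw [h1']
  exact cyc_ge hinv.1 (by omega) (by omega)

lemma interval_disj (hA : G.IsAcyclic) (hh : 1 ≤ h) (hhD : h ≤ Δ) (hdeg : ∀ v, G.degree v ≤ Δ)
    {u c : V} (hmem : c ∈ children G r u) {i i' : ℕ} (hi : i ≤ Δ - 1) (hi' : i' ≤ Δ - 1) :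
    ((fl G r hc h Δ u + kl G r hc h Δ u : ℕ) : ZMod (h + 2*Δ - 1)) + (i : ℕ) ≠
      ((fl G r hc h Δ c + kl G r hc h Δ c : ℕ) : ZMod (h + 2*Δ - 1)) + (i' : ℕ) := by
  obtain ⟨hadj, hd⟩ := (mem_children G r).mp hmem
  have hne : c ≠ r := by
    intro hcr; rw [hcr, SimpleGraph.dist_self] at hd; omega
  have hp : parent G hc r c = u := parent_unique hc hA hadj (by omega)
  obtain ⟨h1, h2, _⟩ := lab_step G r hc h Δ hA hne
  rw [hp] at h1 h2
  have hs := slot_lt G r hc Δ hA hdeg (p := pl G r hc h Δ u) hmem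
  have hinv := inv' G r hc h Δ hA hh hhD hdeg u
  set s := slot G r u (pl G r hc h Δ u) c with hsdef
  intro he
  have hkey : ((fl G r hc h Δ c + kl G r hc h Δ c : ℕ) : ZMod (h + 2*Δ - 1)) =
      ((fl G r hc h Δ u + kl G r hc h Δ u + (Δ + (s - (Δ - h))) : ℕ) : ZMod (h + 2*Δ - 1)) := by
    rw [h1, h2, Nat.cast_add, ZMod.natCast_mod, ← Nat.cast_add]
    exact congrArg _ (by omega)
  rw [hkey] at he
  have he2 : ((fl G r hc h Δ u + kl G r hc h Δ u + i : ℕ) : ZMod (h + 2*Δ - 1)) =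
      ((fl G r hc h Δ u + kl G r hc h Δ u + (Δ + (s - (Δ - h)) + i') : ℕ) :
        ZMod (h + 2*Δ - 1)) := by
    push_cast at he ⊢
    linear_combination he
  rw [ZMod.natCast_eq_natCast_iff] at he2
  have he3 : i ≡ (Δ + (s - (Δ - h))) + i' [MOD (h + 2*Δ - 1)] :=
    Nat.ModEq.add_left_cancel' (fl G r hc h Δ u + kl G r hc h Δ u) he2
  have hij : i = Δ + (s - (Δ - h)) + i' := by
    unfold Nat.ModEq at he3
    rw [Nat.mod_eq_of_lt (by omega), Nat.mod_eq_of_lt (by omega)] at he3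
    exact he3
  omega

end Construction




end Aux

namespace Aux


lemma construction {V : Type} [Fintype V] (G : SimpleGraph V) [DecidableRel G.Adj]
    (hT : G.IsTree) (r : V) (h Δ : ℕ) (hh : 1 ≤ h) (hhD : h ≤ Δ) (hD : 3 ≤ Δ)
    (hdeg : ∀ v, G.degree v ≤ Δ) :
    ∃ f : V → ℕ, IsElegantCLabelling G h 1 (h + 2*Δ - 1) f := by
  have hc := hT.isConnected
  have hA := hT.IsAcyclic
  have hflt : ∀ v, fl G r hc h Δ v < h + 2*Δ - 1 :=
    fun v => (inv' G r hc h Δ hA hh hhD hdeg v).1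
  -- distinct labels for two distinct vertices with a common neighbour
  have hne2 : ∀ m u v : V, G.Adj m u → G.Adj m v → u ≠ v →
      fl G r hc h Δ u ≠ fl G r hc h Δ v := by
    intro m u v hmu hmv huv heq
    obtain ⟨e1, s1lt⟩ := pos_nbr G r hc h Δ hA hh hhD hdeg hmu
    obtain ⟨e2, s2lt⟩ := pos_nbr G r hc h Δ hA hh hhD hdeg hmv
    rw [heq] at e1
    have hcc : ((kl G r hc h Δ m + slotOf G r hc h Δ m u : ℕ) : ZMod (h + 2*Δ - 1)) =
        ((kl G r hc h Δ m + slotOf G r hc h Δ m v : ℕ) : ZMod (h + 2*Δ - 1)) :=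
      add_left_cancel (e1.symm.trans e2)
    rw [ZMod.natCast_eq_natCast_iff] at hcc
    have hcc2 := Nat.ModEq.add_left_cancel' (kl G r hc h Δ m) hcc
    have hse : slotOf G r hc h Δ m u = slotOf G r hc h Δ m v := by
      unfold Nat.ModEq at hcc2
      rw [Nat.mod_eq_of_lt (by omega), Nat.mod_eq_of_lt (by omega)] at hcc2
      exact hcc2
    exact slotOf_inj G r hc h Δ hA hmu hmv huv hse
  -- edges
  have hedge : ∀ u v : V, G.Adj u v →
      (h : ℤ) ≤ cycDist (h + 2*Δ - 1) (fl G r hc h Δ u) (fl G r hc h Δ v) := by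
    intro u v hadj
    rcases adj_dichotomy hc hA (r := r) hadj with ⟨hp, hd⟩ | ⟨hp, hd⟩
    · exact edge_cyc G r hc h Δ hA hh hhD hdeg ((mem_children G r).mpr ⟨hadj, hd⟩)
    · rw [cycDist_comm]
      exact edge_cyc G r hc h Δ hA hh hhD hdeg ((mem_children G r).mpr ⟨hadj.symm, hd⟩)
  -- expressing labels of neighbours inside intervals
  have hpos : ∀ u x : V, G.Adj u x →
      (fl G r hc h Δ x : ZMod (h + 2*Δ - 1)) =
        ((fl G r hc h Δ u + kl G r hc h Δ u : ℕ) : ZMod (h + 2*Δ - 1)) +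
          ((slotOf G r hc h Δ u x : ℕ) : ZMod (h + 2*Δ - 1)) ∧
        slotOf G r hc h Δ u x ≤ Δ - 1 := by
    intro u x hadj
    obtain ⟨e, slt⟩ := pos_nbr G r hc h Δ hA hh hhD hdeg hadj
    refine ⟨?_, by omega⟩
    rw [e]
    push_cast
    ring
  -- interval disjointness along edges (both orientations)
  have hdisj : ∀ u v : V, G.Adj u v → ∀ i i' : ℕ, i ≤ Δ - 1 → i' ≤ Δ - 1 →
      ((fl G r hc h Δ u + kl G r hc h Δ u : ℕ) : ZMod (h + 2*Δ - 1)) + (i : ℕ) ≠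
        ((fl G r hc h Δ v + kl G r hc h Δ v : ℕ) : ZMod (h + 2*Δ - 1)) + (i' : ℕ) := by
    intro u v hadj i i' hi hi'
    rcases adj_dichotomy hc hA (r := r) hadj with ⟨hp, hd⟩ | ⟨hp, hd⟩
    · exact interval_disj G r hc h Δ hA hh hhD hdeg
        ((mem_children G r).mpr ⟨hadj, hd⟩) hi hi'
    · exact fun he => interval_disj G r hc h Δ hA hh hhD hdeg
        ((mem_children G r).mpr ⟨hadj.symm, hd⟩) hi' hi he.symm
  refine ⟨fl G r hc h Δ, ⟨hflt, ?_, ?_⟩, ?_⟩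
  · -- distance one
    intro u v hd
    exact hedge u v (SimpleGraph.dist_eq_one_iff_adj.mp hd)
  · -- distance two or three
    intro u v hd
    have huv : u ≠ v := by
      intro he
      rw [he, SimpleGraph.dist_self] at hd
      omega
    have hne : fl G r hc h Δ u ≠ fl G r hc h Δ v := by
      rcases hd with hd | hd
      · obtain ⟨m, hum, hmv⟩ := exists_chain2 hd
        exact hne2 m u v hum.symm hmv huv
      · obtain ⟨x, y, hux, hxy, hyv⟩ := exists_chain3 hd
        obtain ⟨eu, hiu⟩ := hpos x u hux.symm
        obtain ⟨ev, hiv⟩ := hpos y v hyv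
        intro he
        apply hdisj x y hxy (slotOf G r hc h Δ x u) (slotOf G r hc h Δ y v) hiu hiv
        rw [← eu, ← ev, he]
    have := cyc_ge_one (hflt u) (hflt v) hne
    exact_mod_cast this
  · -- elegance
    refine ⟨fun u => {x : ZMod (h + 2*Δ - 1) | ∃ i : ℕ, i ≤ Δ - 1 ∧
        x = ((fl G r hc h Δ u + kl G r hc h Δ u : ℕ) : ZMod (h + 2*Δ - 1)) + (i : ZMod (h + 2*Δ - 1))},
      ?_, ?_, ?_⟩
    · intro u
      exact ⟨((fl G r hc h Δ u + kl G r hc h Δ u : ℕ) : ZMod (h + 2*Δ - 1)), Δ - 1, rfl⟩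
    · intro u w hadj
      obtain ⟨e, hi⟩ := hpos u w hadj
      exact ⟨slotOf G r hc h Δ u w, hi, e⟩
    · intro u v hadj
      rw [Set.eq_empty_iff_forall_notMem]
      rintro x ⟨⟨i, hi, hx⟩, ⟨i', hi', hx'⟩⟩
      exact hdisj u v hadj i i' hi hi' (hx ▸ hx' ▸ rfl)


end Aux

theorem stmt19 {V : Type} [Fintype V] (G : SimpleGraph V) [DecidableRel G.Adj]
    (hT : G.IsTree) (hdiam : ∃ u v : V, 3 ≤ G.dist u v) (hD : 3 ≤ G.maxDegree)
    (h : ℕ) (hh : 1 ≤ h) (hhD : h ≤ G.maxDegree)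
    (hsub : ∃ r : V, G.degree r = G.maxDegree ∧
      ∀ v : V, G.Adj r v → G.degree v = G.maxDegree) :
    sigmaNum G h 1 = h + 2 * G.maxDegree - 1 ∧
    sigmaStar G h 1 = h + 2 * G.maxDegree - 1 := by
  classical
  obtain ⟨r, hdegr, hnbr⟩ := hsub
  have hdeg : ∀ v, G.degree v ≤ G.maxDegree := fun v => G.degree_le_maxDegree v
  obtain ⟨f, hf⟩ := Aux.construction G hT r h G.maxDegree hh hhD hD hdeg
  have hLpos : 0 < h + 2 * G.maxDegree - 1 := by omega
  have hmem1 : (h + 2 * G.maxDegree - 1) ∈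
      {ℓ : ℕ | 0 < ℓ ∧ ∃ f : V → ℕ, IsCLabelling G h 1 ℓ f} := ⟨hLpos, f, hf.1⟩
  have hmem2 : (h + 2 * G.maxDegree - 1) ∈
      {ℓ : ℕ | 0 < ℓ ∧ ∃ f : V → ℕ, IsElegantCLabelling G h 1 ℓ f} := ⟨hLpos, f, hf⟩
  constructor
  · refine le_antisymm (Nat.sInf_le hmem1) (le_csInf ⟨_, hmem1⟩ ?_)
    rintro ℓ' ⟨hpos, f', hf'⟩
    exact Aux.lower_bound G hT r hdegr hnbr hh hhD hpos hf'
  · refine le_antisymm (Nat.sInf_le hmem2) (le_csInf ⟨_, hmem2⟩ ?_)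
    rintro ℓ' ⟨hpos, f', hf'⟩
    exact Aux.lower_bound G hT r hdegr hnbr hh hhD hpos hf'.1
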